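/- Let σ > 0. For every real ω one has (∑_{k∈ℤ} exp(−σ²(ω + 2πk)²)) / (∑_{k∈ℤ} exp(−σ²(ω + 2πk)²/2))² = σ√π · θ₃(ω/2, e^{−1/(4σ²)}) / (θ₃(ω/2, e^{−1/(2σ²)}))², where θ₃(t, q) = ∑_{n∈ℤ} q^{n²} cos(2nt). -/

import Mathlib

open Real


lemma summable_exp_neg_int_sq {c : ℝ} (hc : 0 < c) :
    Summable fun n : ℤ => Real.exp (-c * (n : ℝ) ^ 2) := by
  have hgeo : Summable fun n : ℕ => Real.exp (-c) ^ n :=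
    summable_geometric_of_lt_one (Real.exp_pos _).le
      (Real.exp_lt_one_iff.2 (neg_lt_zero.2 hc))
  have hnat : Summable fun n : ℕ => Real.exp (-c * (n : ℝ) ^ 2) := by
    refine Summable.of_nonneg_of_le (fun n => (Real.exp_pos _).le) (fun n => ?_) hgeo
    rw [← Real.exp_nat_mul (-c) n]
    apply Real.exp_le_exp.2
    rcases Nat.eq_zero_or_pos n with h | h
    · simp [h]
    · have h1 : (1 : ℝ) ≤ (n : ℝ) := by exact_mod_cast h
      nlinarith [sq_nonneg ((n:ℝ) - 1), mul_pos hc (lt_of_lt_of_le one_pos h1)]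
  refine Summable.of_nat_of_neg ?_ ?_ <;> simpa using hnat

lemma summable_exp_neg_shift {b : ℝ} (hb : 0 < b) (x : ℝ) :
    Summable fun k : ℤ => Real.exp (-b * (x + k) ^ 2) := by
  refine Summable.of_nonneg_of_le (fun k => (Real.exp_pos _).le) (fun k => ?_)
    ((summable_exp_neg_int_sq (half_pos hb)).mul_left (Real.exp (b * x ^ 2)))
  rw [← Real.exp_add]
  apply Real.exp_le_exp.2
  nlinarith [sq_nonneg (2 * x + (k : ℝ)), hb.le, sq_nonneg ((k : ℝ))]

lemma gauss_poisson {b : ℝ} (hb : 0 < b) (x : ℝ) :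
    (∑' k : ℤ, Real.exp (-b * (x + k) ^ 2)) =
      Real.sqrt (π / b) *
        ∑' n : ℤ, Real.exp (-π ^ 2 * n ^ 2 / b) * Real.cos (2 * π * n * x) := by
  have hπ : (π : ℂ) ≠ 0 := Complex.ofReal_ne_zero.2 Real.pi_ne_zero
  have hbne : (b : ℂ) ≠ 0 := Complex.ofReal_ne_zero.2 hb.ne'
  have ha : 0 < ((b : ℂ) / π).re := by
    rw [show (b : ℂ) / π = ((b / π : ℝ) : ℂ) by push_cast; ring, Complex.ofReal_re]
    positivity
  have h := Complex.tsum_exp_neg_quadratic ha (-(b : ℂ) * x / π)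
  -- rewrite LHS terms
  have hL : ∀ n : ℤ, Complex.exp (-(π:ℂ) * ((b:ℂ)/π) * (n:ℂ)^2
        + 2 * π * (-(b : ℂ) * x / π) * n)
      = Complex.exp ((b:ℂ) * x^2) * Complex.exp (-(b:ℂ) * (x + n)^2) := by
    intro n
    rw [← Complex.exp_add]
    congr 1
    field_simp
    ring
  have hR : ∀ n : ℤ, Complex.exp (-(π:ℂ) / ((b:ℂ)/π) * ((n:ℂ) + Complex.I * (-(b : ℂ) * x / π))^2)
      = Complex.exp ((b:ℂ) * x^2) *
        Complex.exp (((-π^2 * n^2 / b : ℝ) : ℂ) + ((2 * π * n * x : ℝ) : ℂ) * Complex.I) := by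
    intro n
    rw [← Complex.exp_add]
    congr 1
    push_cast
    field_simp
    ring_nf
    rw [Complex.I_sq]
    ring
  have hsq : 1 / ((b:ℂ)/π) ^ ((1:ℂ)/2) = ((Real.sqrt (π / b) : ℝ) : ℂ) := by
    rw [show (b : ℂ) / π = ((b / π : ℝ) : ℂ) by push_cast; ring,
      show ((1:ℂ)/2) = (((1:ℝ)/2 : ℝ) : ℂ) by norm_num,
      ← Complex.ofReal_cpow (by positivity) ]
    rw [show ((1:ℂ)) = (((1:ℝ)) : ℂ) by norm_num, ← Complex.ofReal_div]
    norm_cast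
    rw [Real.sqrt_eq_rpow, show π / b = (b / π)⁻¹ by field_simp,
      Real.inv_rpow (by positivity), one_div]
  rw [tsum_congr hL, tsum_congr hR, tsum_mul_left, tsum_mul_left, hsq] at h
  rw [← mul_assoc, mul_comm ((Real.sqrt (π / b) : ℝ) : ℂ) (Complex.exp ((b:ℂ) * x^2)),
    mul_assoc] at h
  have key := mul_left_cancel₀ (Complex.exp_ne_zero ((b:ℂ) * x^2)) h
  -- take real parts
  have hsum2 : Summable fun n : ℤ =>
      Complex.exp (((-π^2 * n^2 / b : ℝ) : ℂ) + ((2 * π * n * x : ℝ) : ℂ) * Complex.I) := by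
    rw [← summable_norm_iff]
    simp only [Complex.norm_exp, Complex.add_re, Complex.ofReal_re,
      Complex.mul_re, Complex.I_re, Complex.I_im, Complex.ofReal_im, mul_zero, zero_mul,
      mul_one, sub_zero, add_zero]
    have := summable_exp_neg_int_sq (c := π^2 / b) (by positivity)
    refine this.congr fun n => ?_
    congr 1
    ring
  have hsum1 : Summable fun k : ℤ => Complex.exp (-(b:ℂ) * ((x:ℂ) + k) ^ 2) := by
    have : ∀ k : ℤ, Complex.exp (-(b:ℂ) * ((x:ℂ) + k) ^ 2)
        = ((Real.exp (-b * (x + k)^2) : ℝ) : ℂ) := by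
      intro k; rw [Complex.ofReal_exp]; congr 1; push_cast; ring
    exact (Summable.congr (Complex.summable_ofReal.2 (summable_exp_neg_shift hb x))
      fun k => (this k).symm)
  have := congrArg Complex.re key
  rw [Complex.re_tsum hsum1, Complex.re_ofReal_mul, Complex.re_tsum hsum2] at this
  convert this using 2
  · funext k
    rw [show -(b:ℂ) * ((x:ℂ) + k) ^ 2 = ((-b * (x + k)^2 : ℝ) : ℂ) by push_cast; ring,
      ← Complex.ofReal_exp, Complex.ofReal_re]
  · refine tsum_congr fun n => ?_
    rw [Complex.exp_re]
    simp only [Complex.add_re, Complex.ofReal_re, Complex.mul_re, Complex.I_re, Complex.I_im,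
      Complex.ofReal_im, Complex.add_im, Complex.mul_im, mul_zero, zero_mul, mul_one,
      sub_zero, add_zero, zero_add]

/-- The third Jacobi theta function `θ₃(t, q) = ∑_{n∈ℤ} q^{n²} cos(2nt)`. -/
noncomputable def theta3 (t q : ℝ) : ℝ :=
  ∑' n : ℤ, q ^ ((n : ℝ) ^ 2) * Real.cos (2 * n * t)

/-- For `σ > 0` and any real `ω`,
`(∑_{k∈ℤ} e^{−σ²(ω+2πk)²}) / (∑_{k∈ℤ} e^{−σ²(ω+2πk)²/2})²
  = σ√π·θ₃(ω/2, e^{−1/(4σ²)})/(θ₃(ω/2, e^{−1/(2σ²)}))²`. -/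
theorem gauss_nod_riesz_function_theta (σ : ℝ) (hσ : 0 < σ) (ω : ℝ) :
    (∑' k : ℤ, Real.exp (-σ ^ 2 * (ω + 2 * π * k) ^ 2)) /
        (∑' k : ℤ, Real.exp (-σ ^ 2 * (ω + 2 * π * k) ^ 2 / 2)) ^ 2 =
      σ * Real.sqrt π * theta3 (ω / 2) (Real.exp (-1 / (4 * σ ^ 2))) /
        (theta3 (ω / 2) (Real.exp (-1 / (2 * σ ^ 2)))) ^ 2 := by
  have hb1 : (0:ℝ) < 4 * π ^ 2 * σ ^ 2 := by positivity
  have hb2 : (0:ℝ) < 2 * π ^ 2 * σ ^ 2 := by positivity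
  have e1 : (∑' k : ℤ, Real.exp (-σ ^ 2 * (ω + 2 * π * k) ^ 2)) =
      Real.sqrt (π / (4 * π ^ 2 * σ ^ 2)) * theta3 (ω / 2) (Real.exp (-1 / (4 * σ ^ 2))) := by
    rw [show (∑' k : ℤ, Real.exp (-σ ^ 2 * (ω + 2 * π * k) ^ 2)) =
        ∑' k : ℤ, Real.exp (-(4 * π ^ 2 * σ ^ 2) * (ω / (2 * π) + k) ^ 2) from
      tsum_congr fun k => by congr 1; field_simp; ring]
    rw [gauss_poisson hb1 (ω / (2 * π))]
    congr 1
    unfold theta3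
    refine tsum_congr fun n => ?_
    rw [← Real.exp_mul,
      show -1 / (4 * σ ^ 2) * (n:ℝ) ^ 2 = -π ^ 2 * (n:ℝ) ^ 2 / (4 * π ^ 2 * σ ^ 2) by
        field_simp,
      show 2 * (n:ℝ) * (ω / 2) = 2 * π * (n:ℝ) * (ω / (2 * π)) by field_simp]
  have e2 : (∑' k : ℤ, Real.exp (-σ ^ 2 * (ω + 2 * π * k) ^ 2 / 2)) =
      Real.sqrt (π / (2 * π ^ 2 * σ ^ 2)) * theta3 (ω / 2) (Real.exp (-1 / (2 * σ ^ 2))) := by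
    rw [show (∑' k : ℤ, Real.exp (-σ ^ 2 * (ω + 2 * π * k) ^ 2 / 2)) =
        ∑' k : ℤ, Real.exp (-(2 * π ^ 2 * σ ^ 2) * (ω / (2 * π) + k) ^ 2) from
      tsum_congr fun k => by congr 1; field_simp]
    rw [gauss_poisson hb2 (ω / (2 * π))]
    congr 1
    unfold theta3
    refine tsum_congr fun n => ?_
    rw [← Real.exp_mul,
      show -1 / (2 * σ ^ 2) * (n:ℝ) ^ 2 = -π ^ 2 * (n:ℝ) ^ 2 / (2 * π ^ 2 * σ ^ 2) by
        field_simp,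
      show 2 * (n:ℝ) * (ω / 2) = 2 * π * (n:ℝ) * (ω / (2 * π)) by field_simp]
  rw [e1, e2, mul_pow, Real.sq_sqrt (le_of_lt (by positivity)), mul_div_mul_comm,
    mul_div_assoc]
  congr 1
  rw [show π / (4 * π ^ 2 * σ ^ 2) = (Real.sqrt π / (2 * π * σ)) ^ 2 by
      rw [div_pow, Real.sq_sqrt Real.pi_pos.le]; ring,
    Real.sqrt_sq (by positivity)]
  field_simp
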